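/- arXiv:2509.14513 — 3 statements merged into one kernel-verified Lean document; each statement's English description precedes it below -/
import Mathlib

section
/- Let n ≥ 1, let (a,b) ⊆ ℝ be a nonempty open interval, and let f : (a,b) → ℝ be n-times continuously differentiable. Then for all x ∈ (a,b), 2 f(x) f^{(n)}(x) = Σ_{k=0}^{⌊n/2⌋} t_{n,k} · ( (f^{(k)})² )^{(n−2k)}(x). -/
open Set

def tcoef (n k : ℕ) : ℤ :=
  if k = 0 then (if n = 0 then 2 else 1)
  else if k ≤ n / 2 then
    (-1 : ℤ) ^ k * ((Nat.choose (n - k) k : ℤ) + (Nat.choose (n - k - 1) (k - 1) : ℤ))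
  else 0

lemma tcoef_eq_zero {n k : ℕ} (h0 : k ≠ 0) (h : n / 2 < k) : tcoef n k = 0 := by
  simp only [tcoef, if_neg h0, if_neg (by omega : ¬ k ≤ n / 2)]

lemma tcoef_zero_right {n : ℕ} (h : n ≠ 0) : tcoef n 0 = 1 := by simp [tcoef, h]

lemma tcoef_formula {n k : ℕ} (h0 : k ≠ 0) (h : k ≤ n / 2) :
    tcoef n k
      = (-1 : ℤ) ^ k * ((Nat.choose (n - k) k : ℤ) + (Nat.choose (n - k - 1) (k - 1) : ℤ)) := by
  simp only [tcoef, if_neg h0, if_pos h]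

lemma tcoef_rec (n k : ℕ) (hk : k ≤ n / 2) :
    tcoef (n + 2) (k + 1) = tcoef (n + 1) (k + 1) - tcoef n k := by
  rcases Nat.eq_zero_or_pos k with rfl | hk1
  · rcases Nat.eq_zero_or_pos n with rfl | hn
    · decide
    · rw [tcoef_formula (by omega) (by omega), tcoef_formula (by omega) (by omega),
        tcoef_zero_right (by omega)]
      have e3 : n + 2 - 1 - 1 = n := by omega
      have e1 : n + 2 - 1 = n + 1 := by omega
      have e4 : n + 1 - 1 - 1 = n - 1 := by omega
      have e2 : n + 1 - 1 = n := by omega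
      rw [e3, e1, e4, e2]
      simp [Nat.choose_one_right]
      ring
  · by_cases hh : k + 1 ≤ (n + 1) / 2
    · obtain ⟨m, hm⟩ : ∃ m, n - k - 1 = m + 1 := ⟨n - k - 2, by omega⟩
      obtain ⟨j, hj⟩ : ∃ j, k = j + 1 := ⟨k - 1, by omega⟩
      have hnk : n - k = m + 2 := by omega
      rw [tcoef_formula (by omega) (by omega : k + 1 ≤ (n+2)/2),
        tcoef_formula (by omega) hh, tcoef_formula (by omega) hk]
      have e2 : n + 2 - (k + 1) - 1 = m + 2 := by omega
      have e1 : n + 2 - (k + 1) = m + 3 := by omega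
      have e4 : n + 1 - (k + 1) - 1 = m + 1 := by omega
      have e3 : n + 1 - (k + 1) = m + 2 := by omega
      have e5 : k + 1 - 1 = k := rfl
      have e6 : k - 1 = j := by omega
      rw [e2, e1, e4, e3, e5, e6, hm, hnk, hj]
      rw [show m + 3 = (m + 2) + 1 from rfl,
        Nat.choose_succ_succ (m+2) (j+1), Nat.choose_succ_succ (m+1) j]
      push_cast
      ring
    · have hn : n = 2 * k := by omega
      subst hn
      rw [tcoef_formula (by omega) (by omega : k + 1 ≤ (2*k+2)/2),
        tcoef_eq_zero (by omega) (by omega), tcoef_formula (by omega) hk]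
      have e2 : 2 * k + 2 - (k + 1) - 1 = k := by omega
      have e1 : 2 * k + 2 - (k + 1) = k + 1 := by omega
      have e4 : 2 * k - k - 1 = k - 1 := by omega
      have e3 : 2 * k - k = k := by omega
      have e5 : k + 1 - 1 = k := rfl
      rw [e2, e1, e4, e3, e5]
      rw [Nat.choose_self, Nat.choose_self, Nat.choose_self]
      push_cast
      ring

lemma contDiffOn_iterDeriv {s : Set ℝ} (hs : UniqueDiffOn ℝ s) {f : ℝ → ℝ} (m k : ℕ)
    (hf : ContDiffOn ℝ (m + k : ℕ) f s) : ContDiffOn ℝ m (iteratedDerivWithin k f s) s := by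
  induction k generalizing f with
  | zero => simpa using hf
  | succ k ih =>
    have hd : ContDiffOn ℝ (m + k : ℕ) (derivWithin f s) s := by
      apply hf.derivWithin hs
      exact_mod_cast (by omega : m + k + 1 ≤ m + (k + 1))
    exact (ih hd).congr fun x hx => congrFun iteratedDerivWithin_succ' x

lemma key (a b : ℝ) : ∀ n : ℕ, ∀ f : ℝ → ℝ, ContDiffOn ℝ n f (Ioo a b) →
    ∀ x ∈ Ioo a b,
      2 * f x * iteratedDerivWithin n f (Ioo a b) x
        = ∑ k ∈ Finset.range (n / 2 + 1), (tcoef n k : ℝ) *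
            iteratedDerivWithin (n - 2 * k)
              (fun y => (iteratedDerivWithin k f (Ioo a b) y) ^ 2) (Ioo a b) x := by
  intro n
  induction n using Nat.twoStepInduction with
  | zero =>
    intro f hf x hx
    simp [tcoef]
    ring
  | one =>
    intro f hf x hx
    have hu : UniqueDiffOn ℝ (Ioo a b) := isOpen_Ioo.uniqueDiffOn
    have hux := hu x hx
    have hdf : DifferentiableWithinAt ℝ f (Ioo a b) x :=
      (hf.differentiableOn (by simp)) x hx
    rw [show (1:ℕ)/2 + 1 = 1 from rfl, Finset.sum_range_one,
      show (1:ℕ) - 2*0 = 1 from rfl]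
    simp only [iteratedDerivWithin_zero]
    rw [iteratedDerivWithin_one, iteratedDerivWithin_one,
      derivWithin_fun_pow hdf 2]
    have h10 : (tcoef 1 0 : ℝ) = 1 := by norm_num [tcoef]
    rw [h10]
    ring
  | more n ih1 ih2 =>
    intro f hf x hx
    have hu : UniqueDiffOn ℝ (Ioo a b) := isOpen_Ioo.uniqueDiffOn
    have hux := hu x hx
    set s := Ioo a b with hsdef
    have hf1 : ContDiffOn ℝ (n + 1 : ℕ) f s :=
      hf.of_le (by exact_mod_cast (by omega : n + 1 ≤ n + 2))
    have hfp : ContDiffOn ℝ (n : ℕ) (derivWithin f s) s :=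
      hf.derivWithin hu (by exact_mod_cast (by omega : n + 1 ≤ n + 2))
    have hg : ∀ k : ℕ, k ≤ n + 2 →
        ContDiffOn ℝ ((n + 2 - k : ℕ)) (fun y => (iteratedDerivWithin k f s y) ^ 2) s := by
      intro k hk
      have h1 : ContDiffOn ℝ ((n + 2 - k : ℕ)) (iteratedDerivWithin k f s) s :=
        contDiffOn_iterDeriv hu _ _ (by rw [show n + 2 - k + k = n + 2 by omega]; exact hf)
      exact h1.pow 2
    have hgd : ∀ k : ℕ, k ≤ (n + 1) / 2 → DifferentiableWithinAt ℝ
        (iteratedDerivWithin (n + 1 - 2 * k)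
          (fun y => (iteratedDerivWithin k f s y) ^ 2) s) s x := by
      intro k hk
      exact ((hg k (by omega)).differentiableOn_iteratedDerivWithin
        (by exact_mod_cast (by omega : n + 1 - 2 * k < n + 2 - k)) hu) x hx
    have hdf : DifferentiableWithinAt ℝ f s x :=
      (hf.differentiableOn (by simp)) x hx
    have hdDn1 : DifferentiableWithinAt ℝ (iteratedDerivWithin (n + 1) f s) s x :=
      (hf.differentiableOn_iteratedDerivWithin
        (by exact_mod_cast (by omega : n + 1 < n + 2)) hu) x hx
    -- differentiate the identity of order n+1
    have hEq := ih2 f hf1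
    have hder : derivWithin (fun y => 2 * f y * iteratedDerivWithin (n + 1) f s y) s x
        = derivWithin (fun y => ∑ k ∈ Finset.range ((n + 1) / 2 + 1), (tcoef (n + 1) k : ℝ) *
            iteratedDerivWithin (n + 1 - 2 * k)
              (fun z => (iteratedDerivWithin k f s z) ^ 2) s y) s x :=
      derivWithin_congr (fun y hy => hEq y hy) (hEq x hx)
    have hL : derivWithin (fun y => 2 * f y * iteratedDerivWithin (n + 1) f s y) s x
        = 2 * derivWithin f s x * iteratedDerivWithin (n + 1) f s x
          + 2 * f x * iteratedDerivWithin (n + 2) f s x := by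
      have hsucc : iteratedDerivWithin (n + 2) f s x
          = derivWithin (iteratedDerivWithin (n + 1) f s) s x := congrFun iteratedDerivWithin_succ x
      rw [derivWithin_fun_mul (hdf.const_mul 2) hdDn1, derivWithin_const_mul 2 hdf, ← hsucc]
    have hR : derivWithin (fun y => ∑ k ∈ Finset.range ((n + 1) / 2 + 1), (tcoef (n + 1) k : ℝ) *
            iteratedDerivWithin (n + 1 - 2 * k)
              (fun z => (iteratedDerivWithin k f s z) ^ 2) s y) s x
        = ∑ k ∈ Finset.range ((n + 1) / 2 + 1), (tcoef (n + 1) k : ℝ) *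
            iteratedDerivWithin (n + 2 - 2 * k)
              (fun z => (iteratedDerivWithin k f s z) ^ 2) s x := by
      rw [derivWithin_fun_sum (fun k hk =>
        (hgd k (Nat.lt_succ_iff.mp (Finset.mem_range.mp hk))).const_mul _)]
      refine Finset.sum_congr rfl fun k hk => ?_
      have hk' : k ≤ (n + 1) / 2 := Nat.lt_succ_iff.mp (Finset.mem_range.mp hk)
      rw [derivWithin_const_mul _ (hgd k hk'), ← congrFun iteratedDerivWithin_succ x,
        show n + 1 - 2 * k + 1 = n + 2 - 2 * k by omega]
    -- identity of order n for the derivative of f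
    have hshift : ∀ (m : ℕ) (y : ℝ), y ∈ s → iteratedDerivWithin m (derivWithin f s) s y
        = iteratedDerivWithin (m + 1) f s y :=
      fun m y hy => (congrFun iteratedDerivWithin_succ' y).symm
    have hfp' := ih1 (derivWithin f s) hfp x hx
    rw [hshift n x hx] at hfp'
    have hterm : ∀ k ∈ Finset.range (n / 2 + 1),
        (tcoef n k : ℝ) * iteratedDerivWithin (n - 2 * k)
          (fun y => (iteratedDerivWithin k (derivWithin f s) s y) ^ 2) s x
        = (tcoef n k : ℝ) * iteratedDerivWithin (n + 2 - 2 * (k + 1))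
          (fun y => (iteratedDerivWithin (k + 1) f s y) ^ 2) s x := by
      intro k hk
      congr 1
      rw [show n + 2 - 2 * (k + 1) = n - 2 * k by omega]
      exact iteratedDerivWithin_congr (fun y hy => by simp only [hshift k y hy]) hx
    rw [Finset.sum_congr rfl hterm] at hfp'
    -- pad the (n+1)-sum to range (n/2 + 2)
    have hpad : ∑ k ∈ Finset.range ((n + 1) / 2 + 1), (tcoef (n + 1) k : ℝ) *
          iteratedDerivWithin (n + 2 - 2 * k)
            (fun z => (iteratedDerivWithin k f s z) ^ 2) s x
        = ∑ k ∈ Finset.range (n / 2 + 2), (tcoef (n + 1) k : ℝ) *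
          iteratedDerivWithin (n + 2 - 2 * k)
            (fun z => (iteratedDerivWithin k f s z) ^ 2) s x := by
      refine Finset.sum_subset (Finset.range_subset_range.mpr (by omega)) (fun k hk hk' => ?_)
      simp only [Finset.mem_range] at hk hk'
      rw [tcoef_eq_zero (by omega) (by omega)]
      simp
    have hmain : 2 * f x * iteratedDerivWithin (n + 2) f s x
        = ∑ k ∈ Finset.range (n / 2 + 2), (tcoef (n + 1) k : ℝ) *
            iteratedDerivWithin (n + 2 - 2 * k)
              (fun z => (iteratedDerivWithin k f s z) ^ 2) s x
          - ∑ k ∈ Finset.range (n / 2 + 1), (tcoef n k : ℝ) *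
            iteratedDerivWithin (n + 2 - 2 * (k + 1))
              (fun z => (iteratedDerivWithin (k + 1) f s z) ^ 2) s x := by
      have h1 := hL.symm.trans (hder.trans hR)
      rw [hpad] at h1
      linarith [h1, hfp']
    -- final assembly
    rw [show (n + 2) / 2 + 1 = (n / 2 + 1) + 1 by omega, Finset.sum_range_succ']
    rw [show (n / 2 + 2) = (n / 2 + 1) + 1 from rfl, Finset.sum_range_succ'] at hmain
    have hsplit : ∑ k ∈ Finset.range (n / 2 + 1), (tcoef (n + 2) (k + 1) : ℝ) *
          iteratedDerivWithin (n + 2 - 2 * (k + 1))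
            (fun y => (iteratedDerivWithin (k + 1) f s y) ^ 2) s x
        = ∑ k ∈ Finset.range (n / 2 + 1), (tcoef (n + 1) (k + 1) : ℝ) *
            iteratedDerivWithin (n + 2 - 2 * (k + 1))
              (fun y => (iteratedDerivWithin (k + 1) f s y) ^ 2) s x
          - ∑ k ∈ Finset.range (n / 2 + 1), (tcoef n k : ℝ) *
            iteratedDerivWithin (n + 2 - 2 * (k + 1))
              (fun y => (iteratedDerivWithin (k + 1) f s y) ^ 2) s x := by
      rw [← Finset.sum_sub_distrib]
      refine Finset.sum_congr rfl fun k hk => ?_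
      simp only [Finset.mem_range] at hk
      rw [tcoef_rec n k (by omega)]
      push_cast
      ring
    have hc2 : (tcoef (n + 2) 0 : ℝ) = 1 := by rw [tcoef_zero_right (by omega)]; norm_num
    have hc1 : (tcoef (n + 1) 0 : ℝ) = 1 := by rw [tcoef_zero_right (by omega)]; norm_num
    rw [hc2] at *
    rw [hc1] at hmain
    linarith [hmain, hsplit]

theorem stmt_3 (n : ℕ) (hn : 1 ≤ n) (a b : ℝ) (hab : a < b) (f : ℝ → ℝ)
    (hf : ContDiffOn ℝ n f (Ioo a b)) :
    ∀ x ∈ Ioo a b,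
      2 * f x * iteratedDerivWithin n f (Ioo a b) x
        = ∑ k ∈ Finset.range (n / 2 + 1), (tcoef n k : ℝ) *
            iteratedDerivWithin (n - 2 * k)
              (fun y => (iteratedDerivWithin k f (Ioo a b) y) ^ 2) (Ioo a b) x := by
  intro x hx
  exact key a b n f hf x hx
end

section
/- Let n ≥ 1, let (a,b) ⊆ ℝ be a nonempty open interval, and let f : (a,b) → ℝ be n-times continuously differentiable. Then for all x ∈ (a,b), Σ_{k=0}^{⌊n/2⌋} (−1)^k C(n−k, k) · ( (f^{(k)})² )^{(n−2k)}(x) = Σ_{ℓ=0}^{n} f^{(n−ℓ)}(x) f^{(ℓ)}(x). -/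
open Finset Set

-- universal trinomial symmetry
lemma tri (l k j : ℕ) : l.choose k * (l-k).choose j = l.choose j * (l-j).choose k := by
  rcases le_or_gt (k+j) l with h | h
  · have h1 := Nat.choose_mul (n := l) (k := k+j) (s := k) (Nat.le_add_right _ _)
    have h2 := Nat.choose_mul (n := l) (k := k+j) (s := j) (Nat.le_add_left _ _)
    have hsym : (k+j).choose k = (k+j).choose j := by
      rw [← Nat.choose_symm (Nat.le_add_left _ _)]; congr 1; omega
    simp only [Nat.add_sub_cancel, Nat.add_sub_cancel_left] at h1 h2
    rw [← h1, hsym, h2]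
  · rcases le_or_gt k l with hk | hk
    · rcases le_or_gt j l with hj | hj
      · rw [Nat.choose_eq_zero_of_lt (by omega : l - k < j),
          Nat.choose_eq_zero_of_lt (by omega : l - j < k)]
        simp
      · rw [Nat.choose_eq_zero_of_lt hj, Nat.choose_eq_zero_of_lt (by omega : l - k < j)]
        simp
    · rw [Nat.choose_eq_zero_of_lt hk, Nat.choose_eq_zero_of_lt (show l - j < k by omega)]
      simp

lemma alt_sum (m N : ℕ) (hm : 1 ≤ m) (hN : m < N) :
    ∑ k ∈ range N, (-1:ℝ)^k * (m.choose k : ℕ) = 0 := by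
  have : ∑ k ∈ range N, (-1:ℝ)^k * (m.choose k : ℕ)
      = ∑ k ∈ range (m+1), (-1:ℝ)^k * (m.choose k : ℕ) := by
    refine (Finset.sum_subset (Finset.range_subset_range.mpr (by omega)) ?_).symm
    intro k _ hk
    simp only [Finset.mem_range, not_lt] at hk
    rw [Nat.choose_eq_zero_of_lt (by omega)]
    simp
  rw [this]
  have := Int.alternating_sum_range_choose (n := m)
  rw [if_neg (by omega)] at this
  have := congrArg (fun z : ℤ => (z : ℝ)) this
  push_cast at this ⊢
  convert this using 2 with k

lemma comb (n l : ℕ) (hl : l ≤ n) :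
    ∑ k ∈ range (l+1), (-1:ℝ)^k * ((l.choose k * (n-k).choose l : ℕ) : ℝ) = 1 := by
  have expand : ∀ k ∈ range (l+1), (-1:ℝ)^k * ((l.choose k * (n-k).choose l : ℕ) : ℝ)
      = ∑ ij ∈ Finset.HasAntidiagonal.antidiagonal l, (-1:ℝ)^k *
          (((n-l).choose ij.1 * (l.choose ij.2 * (l-ij.2).choose k) : ℕ) : ℝ) := by
    intro k hk
    simp only [Finset.mem_range] at hk
    have hv : (n-k).choose l = ∑ ij ∈ Finset.HasAntidiagonal.antidiagonal l, (n-l).choose ij.1 * (l-k).choose ij.2 := by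
      have : n - k = (n - l) + (l - k) := by omega
      rw [this, Nat.add_choose_eq]
    rw [hv]
    push_cast [Finset.mul_sum, Finset.sum_mul]
    refine Finset.sum_congr rfl fun ij _ => ?_
    have := tri l k ij.2
    have h' := congrArg (fun z : ℕ => (z:ℝ)) this
    push_cast at h'
    linear_combination ((-1:ℝ)^k * ((n-l).choose ij.1 : ℝ)) * h'
  rw [Finset.sum_congr rfl expand, Finset.sum_comm]
  have : ∀ ij ∈ Finset.HasAntidiagonal.antidiagonal l,
      (∑ k ∈ range (l+1), (-1:ℝ)^k * (((n-l).choose ij.1 * (l.choose ij.2 * (l-ij.2).choose k) : ℕ) : ℝ))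
      = if ij.2 = l then 1 else 0 := by
    intro ij hij
    rw [Finset.HasAntidiagonal.mem_antidiagonal] at hij
    rcases eq_or_ne ij.2 l with h | h
    · rw [if_pos h]
      have hi1 : ij.1 = 0 := by omega
      have : ∀ k ∈ range (l+1), (-1:ℝ)^k * (((n-l).choose ij.1 * (l.choose ij.2 * (l-ij.2).choose k) : ℕ) : ℝ)
          = if k = 0 then 1 else 0 := by
        intro k hk
        rcases eq_or_ne k 0 with rfl | hk0
        · simp [hi1, h]
        · rw [if_neg hk0, h, Nat.sub_self, Nat.choose_eq_zero_of_lt (show 0 < k by omega)]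
          simp
      rw [Finset.sum_congr rfl this, Finset.sum_ite_eq' (range (l+1)) 0]
      simp
    · rw [if_neg h]
      have h2 : ij.2 < l := by omega
      have : ∀ k ∈ range (l+1), (-1:ℝ)^k * (((n-l).choose ij.1 * (l.choose ij.2 * (l-ij.2).choose k) : ℕ) : ℝ)
          = ((n-l).choose ij.1 * l.choose ij.2 : ℕ) * ((-1:ℝ)^k * ((l-ij.2).choose k : ℕ)) := by
        intro k _; push_cast; ring
      rw [Finset.sum_congr rfl this, ← Finset.mul_sum,
        alt_sum (l - ij.2) (l+1) (by omega) (by omega), mul_zero]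
  rw [Finset.sum_congr rfl this]
  have fix : ∀ ij ∈ Finset.HasAntidiagonal.antidiagonal l, (if ij.2 = l then (1:ℝ) else 0)
      = if ij = ((0:ℕ), l) then 1 else 0 := by
    intro ij hij
    rw [Finset.HasAntidiagonal.mem_antidiagonal] at hij
    by_cases h : ij.2 = l
    · rw [if_pos h, if_pos (by ext <;> simp <;> omega)]
    · rw [if_neg h, if_neg (by simp [Prod.ext_iff]; omega)]
  rw [Finset.sum_congr rfl fix, Finset.sum_ite_eq' (Finset.HasAntidiagonal.antidiagonal l) ((0 : ℕ), l)]
  simp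

lemma pascal_sum (m : ℕ) (u v : ℕ → ℝ) :
    (∑ i ∈ range (m+1), (m.choose i : ℝ) * u (i+1) * v (m-i))
      + (∑ i ∈ range (m+1), (m.choose i : ℝ) * u i * v (m-i+1))
    = ∑ i ∈ range (m+2), ((m+1).choose i : ℝ) * u i * v (m+1-i) := by
  rw [Finset.sum_range_succ' (fun i => ((m+1).choose i : ℝ) * u i * v (m+1-i)) (m+1)]
  have split : ∀ i ∈ range (m+1), ((m+1).choose (i+1) : ℝ) * u (i+1) * v (m+1-(i+1))
      = (m.choose i : ℝ) * u (i+1) * v (m-i) + (m.choose (i+1) : ℝ) * u (i+1) * v (m-i) := by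
    intro i hi
    have : (m+1).choose (i+1) = m.choose i + m.choose (i+1) := Nat.choose_succ_succ m i
    have h2 : m + 1 - (i+1) = m - i := by omega
    rw [this, h2]; push_cast; ring
  rw [Finset.sum_congr rfl split, Finset.sum_add_distrib]
  have e1 : ∑ i ∈ range (m+1), (m.choose (i+1) : ℝ) * u (i+1) * v (m-i)
      = ∑ i ∈ range m, (m.choose (i+1) : ℝ) * u (i+1) * v (m-i) := by
    rw [Finset.sum_range_succ, Nat.choose_succ_self]
    simp
  have e2 : ∑ i ∈ range (m+1), (m.choose i : ℝ) * u i * v (m-i+1)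
      = (∑ i ∈ range m, (m.choose (i+1) : ℝ) * u (i+1) * v (m-(i+1)+1))
        + (m.choose 0 : ℝ) * u 0 * v (m-0+1) :=
    Finset.sum_range_succ' _ m
  have e3 : ∀ i ∈ range m, (m.choose (i+1) : ℝ) * u (i+1) * v (m-(i+1)+1)
      = (m.choose (i+1) : ℝ) * u (i+1) * v (m-i) := by
    intro i hi
    rw [Finset.mem_range] at hi
    congr 2
    omega
  rw [e1, e2, Finset.sum_congr rfl e3]
  simp only [Nat.choose_zero_right, Nat.cast_one, Nat.sub_zero, Nat.choose_zero_right]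
  ring

lemma leibniz {s : Set ℝ} (hs : UniqueDiffOn ℝ s) (m : ℕ) :
    ∀ (F G : ℝ → ℝ), ContDiffOn ℝ m F s → ContDiffOn ℝ m G s → ∀ x ∈ s,
    iteratedDerivWithin m (fun y => F y * G y) s x
      = ∑ i ∈ range (m+1), (m.choose i : ℝ) * iteratedDerivWithin i F s x
          * iteratedDerivWithin (m-i) G s x := by
  induction m with
  | zero => intro F G _ _ x hx; simp
  | succ m IH =>
    intro F G hF hG x hx
    have hF1 : ContDiffOn ℝ m (derivWithin F s) s :=
      hF.derivWithin hs (by exact_mod_cast Nat.le_refl (m+1))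
    have hG1 : ContDiffOn ℝ m (derivWithin G s) s :=
      hG.derivWithin hs (by exact_mod_cast Nat.le_refl (m+1))
    have hFm : ContDiffOn ℝ m F s := hF.of_le (by exact_mod_cast Nat.le_succ m)
    have hGm : ContDiffOn ℝ m G s := hG.of_le (by exact_mod_cast Nat.le_succ m)
    rw [iteratedDerivWithin_succ']
    have heq : Set.EqOn (derivWithin (fun y => F y * G y) s)
        (fun y => derivWithin F s y * G y + F y * derivWithin G s y) s := by
      intro y hy
      exact derivWithin_mul (hF.differentiableOn (by simp) y hy)
        (hG.differentiableOn (by simp) y hy)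
    rw [iteratedDerivWithin_congr heq hx]
    have hadd := iteratedDerivWithin_add hx hs
      (f := fun y => derivWithin F s y * G y) (g := fun y => F y * derivWithin G s y)
      (n := m) ((hF1.mul hGm) x hx) ((hFm.mul hG1) x hx)
    have : (fun y => derivWithin F s y * G y + F y * derivWithin G s y)
        = (fun y => derivWithin F s y * G y) + (fun y => F y * derivWithin G s y) := rfl
    rw [this, hadd, IH _ _ hF1 hGm x hx, IH _ _ hFm hG1 x hx]
    have r1 : ∀ i ∈ range (m+1),
        (m.choose i : ℝ) * iteratedDerivWithin i (derivWithin F s) s x * iteratedDerivWithin (m-i) G s x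
        = (m.choose i : ℝ) * iteratedDerivWithin (i+1) F s x * iteratedDerivWithin (m-i) G s x := by
      intro i _
      rw [iteratedDerivWithin_succ']
    have r2 : ∀ i ∈ range (m+1),
        (m.choose i : ℝ) * iteratedDerivWithin i F s x * iteratedDerivWithin (m-i) (derivWithin G s) s x
        = (m.choose i : ℝ) * iteratedDerivWithin i F s x * iteratedDerivWithin (m-i+1) G s x := by
      intro i _
      rw [iteratedDerivWithin_succ']
    rw [Finset.sum_congr rfl r1, Finset.sum_congr rfl r2]
    exact pascal_sum m (fun i => iteratedDerivWithin i F s x) (fun i => iteratedDerivWithin i G s x)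

lemma iter_iter {s : Set ℝ} (hs : UniqueDiffOn ℝ s) (f : ℝ → ℝ) (i : ℕ) :
    ∀ (k : ℕ), ∀ x ∈ s, iteratedDerivWithin i (iteratedDerivWithin k f s) s x
      = iteratedDerivWithin (i + k) f s x := by
  induction i with
  | zero => intro k x hx; simp
  | succ i IH =>
    intro k x hx
    rw [iteratedDerivWithin_succ']
    have heq : Set.EqOn (derivWithin (iteratedDerivWithin k f s) s)
        (iteratedDerivWithin (k+1) f s) s := fun y hy =>
      (congrFun iteratedDerivWithin_succ y).symm
    rw [iteratedDerivWithin_congr heq hx, IH (k+1) x hx]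
    congr 1
    omega

lemma contDiffOn_iter {s : Set ℝ} (hs : UniqueDiffOn ℝ s) (k : ℕ) :
    ∀ (n m : ℕ) (f : ℝ → ℝ), ContDiffOn ℝ n f s → k + m ≤ n →
      ContDiffOn ℝ m (iteratedDerivWithin k f s) s := by
  induction k with
  | zero =>
    intro n m f hf h
    rw [iteratedDerivWithin_zero]
    exact hf.of_le (by exact_mod_cast (by omega : m ≤ n))
  | succ k IH =>
    intro n m f hf h
    have hd : ContDiffOn ℝ (k+m) (derivWithin f s) s :=
      hf.derivWithin hs (by exact_mod_cast (show k+m+1 ≤ n by omega))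
    have := IH (k+m) m (derivWithin f s) hd (by omega)
    exact this.congr fun x hx => congrFun iteratedDerivWithin_succ' x

theorem stmt_4 (n : ℕ) (hn : 1 ≤ n) (a b : ℝ) (hab : a < b) (f : ℝ → ℝ)
    (hf : ContDiffOn ℝ n f (Ioo a b)) :
    ∀ x ∈ Ioo a b,
      ∑ k ∈ Finset.range (n / 2 + 1), (-1 : ℝ) ^ k * (Nat.choose (n - k) k : ℝ) *
          iteratedDerivWithin (n - 2 * k)
            (fun y => (iteratedDerivWithin k f (Ioo a b) y) ^ 2) (Ioo a b) x
        = ∑ l ∈ Finset.range (n + 1),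
            iteratedDerivWithin (n - l) f (Ioo a b) x * iteratedDerivWithin l f (Ioo a b) x := by
  intro x hx
  set s := Ioo a b with hsdef
  have hs : UniqueDiffOn ℝ s := (isOpen_Ioo).uniqueDiffOn
  set u : ℕ → ℝ := fun m => iteratedDerivWithin m f s x with hu
  have step : ∀ k ∈ Finset.range (n/2+1),
      (-1:ℝ)^k * ((n-k).choose k : ℝ) * iteratedDerivWithin (n-2*k)
          (fun y => (iteratedDerivWithin k f s y)^2) s x
      = ∑ i ∈ Finset.range (n-2*k+1),
          (-1:ℝ)^k * (((n-k).choose k * (n-2*k).choose i : ℕ) : ℝ) * u (i+k) * u ((n-2*k-i)+k) := by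
    intro k hk
    rw [Finset.mem_range] at hk
    have hsq : (fun y => (iteratedDerivWithin k f s y)^2)
        = fun y => iteratedDerivWithin k f s y * iteratedDerivWithin k f s y := by
      funext y; ring
    have hcd : ContDiffOn ℝ (n-2*k) (iteratedDerivWithin k f s) s :=
      contDiffOn_iter hs k n (n-2*k) f hf (by omega)
    rw [hsq, leibniz hs (n-2*k) _ _ hcd hcd x hx, Finset.mul_sum]
    refine Finset.sum_congr rfl fun i hi => ?_
    rw [iter_iter hs f i k x hx, iter_iter hs f (n-2*k-i) k x hx]
    push_cast
    ring
  rw [Finset.sum_congr rfl step, Finset.sum_sigma']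
  have bij : ∑ p ∈ (Finset.range (n/2+1)).sigma (fun k => Finset.range (n-2*k+1)),
        (-1:ℝ)^p.1 * (((n-p.1).choose p.1 * (n-2*p.1).choose p.2 : ℕ) : ℝ) * u (p.2+p.1) * u ((n-2*p.1-p.2)+p.1)
      = ∑ q ∈ (Finset.range (n+1)).sigma (fun l => Finset.range (min l (n-l) + 1)),
        (-1:ℝ)^q.2 * ((q.1.choose q.2 * (n-q.2).choose q.1 : ℕ) : ℝ) * u q.1 * u (n - q.1) := by
    refine Finset.sum_nbij' (fun p => ⟨p.1 + p.2, p.1⟩) (fun q => ⟨q.2, q.1 - q.2⟩) ?_ ?_ ?_ ?_ ?_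
    · intro p hp
      obtain ⟨k, i⟩ := p
      dsimp only
      simp only [Finset.mem_sigma, Finset.mem_range, Nat.lt_succ_iff, le_min_iff] at hp ⊢
      omega
    · intro q hq
      obtain ⟨l, k⟩ := q
      dsimp only
      simp only [Finset.mem_sigma, Finset.mem_range, Nat.lt_succ_iff, le_min_iff] at hq ⊢
      omega
    · intro p hp
      obtain ⟨k, i⟩ := p
      simp only [Finset.mem_sigma, Finset.mem_range, Nat.lt_succ_iff, le_min_iff] at hp
      dsimp only
      have h' : k + i - k = i := by omega
      rw [h']
    · intro q hq
      obtain ⟨l, k⟩ := q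
      simp only [Finset.mem_sigma, Finset.mem_range, Nat.lt_succ_iff, le_min_iff] at hq
      dsimp only
      have h' : k + (l - k) = l := by omega
      rw [h']
    · intro p hp
      obtain ⟨k, i⟩ := p
      simp only [Finset.mem_sigma, Finset.mem_range, Nat.lt_succ_iff] at hp
      dsimp only
      have hch : (n-k).choose k * (n-2*k).choose i = (k+i).choose k * (n-k).choose (k+i) := by
        have h1 := Nat.choose_mul (n := n-k) (k := k+i) (s := k)
          (Nat.le_add_right _ _)
        have h2 : n - k - k = n - 2*k := by omega
        have h3 : k + i - k = i := by omega
        rw [h2, h3] at h1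
        rw [← h1, Nat.mul_comm]
      have e1 : i + k = k + i := by omega
      have e2 : (n-2*k-i)+k = n - (k+i) := by omega
      rw [e1, e2, hch]
  rw [bij, Finset.sum_sigma]
  refine Finset.sum_congr rfl fun l hl => ?_
  dsimp only
  rw [Finset.mem_range] at hl
  have hext : (∑ k ∈ Finset.range (min l (n-l) + 1),
        (-1:ℝ)^k * ((l.choose k * (n-k).choose l : ℕ) : ℝ) * u l * u (n-l))
      = ∑ k ∈ Finset.range (l+1), (-1:ℝ)^k * ((l.choose k * (n-k).choose l : ℕ) : ℝ) * u l * u (n-l) := by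
    refine Finset.sum_subset ?_ ?_
    · intro k hk
      simp only [Finset.mem_range, Nat.lt_succ_iff, le_min_iff] at hk ⊢
      omega
    · intro k hk hk'
      simp only [Finset.mem_range, Nat.lt_succ_iff, le_min_iff] at hk hk'
      rw [Nat.choose_eq_zero_of_lt (show n - k < l by omega)]
      simp
  rw [hext]
  have hfac : ∀ k ∈ Finset.range (l+1),
      (-1:ℝ)^k * ((l.choose k * (n-k).choose l : ℕ) : ℝ) * u l * u (n-l)
      = ((-1:ℝ)^k * ((l.choose k * (n-k).choose l : ℕ) : ℝ)) * (u l * u (n-l)) := by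
    intro k _; ring
  rw [Finset.sum_congr rfl hfac, ← Finset.sum_mul, comb n l (by omega), one_mul]
  simp only [hu]
  exact mul_comm _ _
end

section
/- For every n ∈ ℕ₀ and every ℓ with 0 ≤ ℓ ≤ n, Σ_{k=0}^{⌊n/2⌋} (−1)^k C(n−k, k) C(n−2k, ℓ−k) = 1. -/
open Finset

lemma key_trinomial (n k l : ℕ) (hk : k ≤ l) (h2 : 2 * k ≤ n) :
    (n - k).choose k * (n - 2 * k).choose (l - k) = (n - k).choose l * l.choose k := by
  rcases le_or_gt l (n - k) with h | h
  · have := Nat.choose_mul (n := n - k) (k := l) (s := k) hk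
    rw [this, show n - k - k = n - 2 * k by omega]
  · rw [Nat.choose_eq_zero_of_lt h, Nat.choose_eq_zero_of_lt (show n - 2 * k < l - k by omega)]
    ring

lemma auxA : ∀ l n : ℕ, l ≤ n →
    (∑ k ∈ range (l + 1), (-1 : ℤ) ^ k * (l.choose k : ℤ) * ((n - k).choose l : ℤ)) = 1 := by
  intro l
  induction l with
  | zero => intro n _; simp
  | succ l ih =>
    intro n hn
    induction n, hn using Nat.le_induction with
    | base =>
      rw [Finset.sum_range_succ']
      have h0 : ∀ k ∈ range (l + 1),
          (-1 : ℤ) ^ (k + 1) * ((l + 1).choose (k + 1) : ℤ)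
            * ((l + 1 - (k + 1)).choose (l + 1) : ℤ) = 0 := by
        intro k hk
        rw [Nat.choose_eq_zero_of_lt (show l + 1 - (k + 1) < l + 1 by omega)]
        push_cast; ring
      rw [Finset.sum_congr rfl h0]
      simp
    | succ n hn ihn =>
      have pascal : ∀ k ∈ range (l + 2),
          (-1 : ℤ) ^ k * ((l + 1).choose k : ℤ) * ((n + 1 - k).choose (l + 1) : ℤ) =
          (-1 : ℤ) ^ k * ((l + 1).choose k : ℤ) * ((n - k).choose (l + 1) : ℤ)
          + (-1 : ℤ) ^ k * ((l + 1).choose k : ℤ) * ((n - k).choose l : ℤ) := by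
        intro k hk
        simp only [mem_range] at hk
        rw [show n + 1 - k = (n - k) + 1 by omega, Nat.choose_succ_succ]
        push_cast; ring
      rw [Finset.sum_congr rfl pascal, Finset.sum_add_distrib, ihn]
      have hD : (∑ k ∈ range (l + 2),
          (-1 : ℤ) ^ k * (l.choose k : ℤ) * ((n - k).choose l : ℤ)) = 1 := by
        rw [Finset.sum_range_succ, Nat.choose_eq_zero_of_lt (Nat.lt_succ_self l)]
        simpa using ih n (by omega)
      have hBD : (∑ k ∈ range (l + 2),
            (-1 : ℤ) ^ k * ((l + 1).choose k : ℤ) * ((n - k).choose l : ℤ))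
          - (∑ k ∈ range (l + 2),
            (-1 : ℤ) ^ k * (l.choose k : ℤ) * ((n - k).choose l : ℤ)) = -1 := by
        rw [← Finset.sum_sub_distrib]
        have step : ∀ k ∈ range (l + 2),
            (-1 : ℤ) ^ k * ((l + 1).choose k : ℤ) * ((n - k).choose l : ℤ)
            - (-1 : ℤ) ^ k * (l.choose k : ℤ) * ((n - k).choose l : ℤ)
            = (-1 : ℤ) ^ k * (((l + 1).choose k : ℤ) - (l.choose k : ℤ))
                * ((n - k).choose l : ℤ) := by
          intro k _; ring
        rw [Finset.sum_congr rfl step, Finset.sum_range_succ']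
        have h1 : ∀ k ∈ range (l + 1),
            (-1 : ℤ) ^ (k + 1) * (((l + 1).choose (k + 1) : ℤ) - (l.choose (k + 1) : ℤ))
              * ((n - (k + 1)).choose l : ℤ)
            = -((-1 : ℤ) ^ k * (l.choose k : ℤ) * (((n - 1) - k).choose l : ℤ)) := by
          intro k _
          rw [Nat.choose_succ_succ, show n - (k + 1) = (n - 1) - k by omega]
          push_cast; ring
        rw [Finset.sum_congr rfl h1, Finset.sum_neg_distrib, ih (n - 1) (by omega)]
        simp
      have hB : (∑ k ∈ range (l + 2),
          (-1 : ℤ) ^ k * ((l + 1).choose k : ℤ) * ((n - k).choose l : ℤ)) = 0 := by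
        have := hBD
        rw [hD] at this
        linarith
      rw [hB]; ring

theorem stmt_5 (n l : ℕ) (hl : l ≤ n) :
    ∑ k ∈ Finset.range (n / 2 + 1),
        (if k ≤ l then
          (-1 : ℤ) ^ k * (Nat.choose (n - k) k : ℤ) * (Nat.choose (n - 2 * k) (l - k) : ℤ)
        else 0) = 1 := by
  have step1 : ∀ k ∈ range (n / 2 + 1),
      (if k ≤ l then
        (-1 : ℤ) ^ k * (Nat.choose (n - k) k : ℤ) * (Nat.choose (n - 2 * k) (l - k) : ℤ)
      else 0)
      = (-1 : ℤ) ^ k * (l.choose k : ℤ) * ((n - k).choose l : ℤ) := by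
    intro k hk
    simp only [mem_range] at hk
    by_cases h : k ≤ l
    · rw [if_pos h]
      have h2 := key_trinomial n k l h (by omega)
      rw [mul_assoc, ← Nat.cast_mul, h2, Nat.cast_mul]
      ring
    · rw [if_neg h, Nat.choose_eq_zero_of_lt (by omega : l < k)]
      push_cast; ring
  rw [Finset.sum_congr rfl step1]
  have hsub : range (n / 2 + 1) ⊆ range (n + 1) := by
    apply Finset.range_subset_range.mpr; omega
  have hext : (∑ k ∈ range (n + 1), (-1 : ℤ) ^ k * (l.choose k : ℤ) * ((n - k).choose l : ℤ))
      = ∑ k ∈ range (n / 2 + 1), (-1 : ℤ) ^ k * (l.choose k : ℤ) * ((n - k).choose l : ℤ) := by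
    symm
    apply Finset.sum_subset hsub
    intro k hk hk'
    simp only [mem_range] at hk hk'
    by_cases h : k ≤ l
    · rw [Nat.choose_eq_zero_of_lt (show n - k < l by omega)]
      push_cast; ring
    · rw [Nat.choose_eq_zero_of_lt (by omega : l < k)]
      push_cast; ring
  have hext2 : (∑ k ∈ range (n + 1), (-1 : ℤ) ^ k * (l.choose k : ℤ) * ((n - k).choose l : ℤ))
      = ∑ k ∈ range (l + 1), (-1 : ℤ) ^ k * (l.choose k : ℤ) * ((n - k).choose l : ℤ) := by
    symm
    apply Finset.sum_subset (Finset.range_subset_range.mpr (by omega))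
    intro k hk hk'
    simp only [mem_range] at hk hk'
    rw [Nat.choose_eq_zero_of_lt (by omega : l < k)]
    push_cast; ring
  rw [← hext, hext2]
  exact auxA l n hl
end
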